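/- arXiv:2512.04610 — 2 statements merged into one kernel-verified Lean document; each statement's English description precedes it below -/
import Mathlib

section
/- Let G be a graph with no K_{t₀,t₀} subgraph, let r = 2r'+1 be odd, and let F = (P₁,P₂) be a flip. Suppose u₁,…,u_{t₀}, v₁,…,v_{t₀} are 2t₀ distinct vertices such that for each i the pair (v_i,u_i) is joined in G by a path of length at most r whose only edge between P₁ and P₂ is a single edge a_i b_i with a_i ∈ P₁, b_i ∈ P₂, where the segment from v_i to a_i has length exactly r' and the segment from b_i to u_i has length at most r', and all the a_i's are distinct and all the b_i's are distinct, and in G ⊕ F all pairwise distances among {u₁,…,u_{t₀},v₁,…,v_{t₀}} exceed r. Then {a₁,…,a_{t₀}} and {b₁,…,b_{t₀}} form a complete bipartite subgraph K_{t₀,t₀} in G — a contradiction; hence this configuration is impossible. -/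
/-- The flip of a graph `G` on a pair of vertex sets `(A, B)`: the adjacency between
every pair of distinct vertices `u ∈ A`, `v ∈ B` is complemented. -/
def gflip {V : Type*} (G : SimpleGraph V) (A B : Set V) : SimpleGraph V where
  Adj u v := u ≠ v ∧ Xor' (G.Adj u v) ((u ∈ A ∧ v ∈ B) ∨ (u ∈ B ∧ v ∈ A))
  symm := by
    constructor
    intro u v hx
    obtain ⟨h, hx⟩ := hx
    refine ⟨h.symm, ?_⟩
    have hGA : G.Adj v u ↔ G.Adj u v := ⟨fun h => h.symm, fun h => h.symm⟩
    unfold Xor' at *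
    unfold Xor at *
    tauto
  loopless := by constructor; intro v hx; exact hx.1 rfl

/-- `G` contains `K_{t,t}` as a subgraph. -/
def HasBiclique {V : Type*} (G : SimpleGraph V) (t : ℕ) : Prop :=
  ∃ X Y : Finset V, Disjoint X Y ∧ X.card = t ∧ Y.card = t ∧
    ∀ x ∈ X, ∀ y ∈ Y, G.Adj x y

lemma transfer_ok {V : Type*} (G : SimpleGraph V) (P₁ P₂ : Set V) {x y c : V}
    (p : G.Walk x y) (h : ∀ w ∈ p.support, w ∈ P₁ ∪ P₂ → w = c) :
    ∀ e ∈ p.edges, e ∈ (gflip G P₁ P₂).edgeSet := by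
  intro e he
  induction e using Sym2.ind with
  | _ x' y' =>
    have hadj : G.Adj x' y' := p.adj_of_mem_edges he
    have hx := p.fst_mem_support_of_mem_edges he
    have hy := p.snd_mem_support_of_mem_edges he
    refine ⟨hadj.ne, Or.inl ⟨hadj, ?_⟩⟩
    rintro (⟨h1, h2⟩ | ⟨h1, h2⟩)
    · exact hadj.ne ((h x' hx (Or.inl h1)).trans (h y' hy (Or.inr h2)).symm)
    · exact hadj.ne ((h x' hx (Or.inr h1)).trans (h y' hy (Or.inl h2)).symm)

/-- The odd-radius case configuration is impossible: in a `K_{t₀,t₀}`-free graph, one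
cannot have `2t₀` distinct vertices `u₁,…,u_{t₀},v₁,…,v_{t₀}` joined by paths of length
at most `r = 2r'+1`, each crossing the flip `(P₁,P₂)` at a single edge `aᵢbᵢ`, with the
segment `vᵢ—aᵢ` of length exactly `r'` and the segment `bᵢ—uᵢ` of length at most `r'`,
while all pairwise distances among those vertices exceed `r` after the flip. -/
theorem odd_case_impossible {V : Type*} (G : SimpleGraph V) (t₀ r' : ℕ) (ht₀ : 0 < t₀)
    (P₁ P₂ : Set V) (u v a b : Fin t₀ → V)
    (hinj : Function.Injective (Sum.elim u v : Fin t₀ ⊕ Fin t₀ → V))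
    (ha_inj : Function.Injective a) (hb_inj : Function.Injective b)
    (haP : ∀ i, a i ∈ P₁) (hbP : ∀ i, b i ∈ P₂)
    (hab : ∀ i, G.Adj (a i) (b i))
    (hwalk1 : ∀ i, ∃ p : G.Walk (v i) (a i), p.length = r' ∧
      ∀ w ∈ p.support, w ∈ P₁ ∪ P₂ → w = a i)
    (hwalk2 : ∀ i, ∃ p : G.Walk (b i) (u i), p.length ≤ r' ∧
      ∀ w ∈ p.support, w ∈ P₁ ∪ P₂ → w = b i)
    (hfar : ∀ x ∈ Set.range u ∪ Set.range v, ∀ y ∈ Set.range u ∪ Set.range v,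
      x ≠ y → ∀ p : (gflip G P₁ P₂).Walk x y, 2 * r' + 1 < p.length)
    (hKtt : ¬ HasBiclique G t₀) :
    False := by
  classical
  -- Step 1: all pairs (a i, b j) are adjacent in G
  have hadj_all : ∀ i j, G.Adj (a i) (b j) := by
    intro i j
    by_cases hij : i = j
    · subst hij; exact hab i
    · by_contra hnot
      obtain ⟨p, hp, hpw⟩ := hwalk1 i
      obtain ⟨q, hq, hqw⟩ := hwalk2 j
      have hneq : v i ≠ u j := by
        intro h
        have : (Sum.inr i : Fin t₀ ⊕ Fin t₀) = Sum.inl j := hinj h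
        simp at this
      have hvi : v i ∈ Set.range u ∪ Set.range v := Or.inr ⟨i, rfl⟩
      have huj : u j ∈ Set.range u ∪ Set.range v := Or.inl ⟨j, rfl⟩
      let p' := p.transfer (gflip G P₁ P₂) (transfer_ok G P₁ P₂ p hpw)
      let q' := q.transfer (gflip G P₁ P₂) (transfer_ok G P₁ P₂ q hqw)
      by_cases hab' : a i = b j
      · let W := p'.append (q'.copy hab'.symm rfl)
        have hlen : W.length = p.length + q.length := by
          simp [W, p', q', SimpleGraph.Walk.length_append]
        have := hfar _ hvi _ huj hneq W
        omega
      · have hflip : (gflip G P₁ P₂).Adj (a i) (b j) :=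
          ⟨hab', Or.inr ⟨Or.inl ⟨haP i, hbP j⟩, hnot⟩⟩
        let W := p'.append (SimpleGraph.Walk.cons hflip q')
        have hlen : W.length = p.length + (q.length + 1) := by
          simp [W, p', q', SimpleGraph.Walk.length_append]
        have := hfar _ hvi _ huj hneq W
        omega
  -- Step 2: build the biclique
  have hne : ∀ i j, a i ≠ b j := fun i j => (hadj_all i j).ne
  refine hKtt ⟨Finset.univ.image a, Finset.univ.image b, ?_, ?_, ?_, ?_⟩
  · rw [Finset.disjoint_left]
    rintro x hx hy
    simp only [Finset.mem_image, Finset.mem_univ, true_and] at hx hy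
    obtain ⟨i, rfl⟩ := hx
    obtain ⟨j, hj⟩ := hy
    exact hne i j hj.symm
  · rw [Finset.card_image_of_injective _ ha_inj, Finset.card_univ, Fintype.card_fin]
  · rw [Finset.card_image_of_injective _ hb_inj, Finset.card_univ, Fintype.card_fin]
  · intro x hx y hy
    simp only [Finset.mem_image, Finset.mem_univ, true_and] at hx hy
    obtain ⟨i, rfl⟩ := hx
    obtain ⟨j, rfl⟩ := hy
    exact hadj_all i j
end

section
/- A class of graphs 𝒞 is weakly sparse and strongly flip-flat if and only if 𝒞 is uniformly almost-wide. -/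
/-- Applying a list of flips to `G`. -/
def gflipAll {V : Type*} (G : SimpleGraph V) (L : List (Set V × Set V)) : SimpleGraph V :=
  L.foldl (fun H F => gflip H F.1 F.2) G

/-- `B` is `r`-independent in `H`. -/
def RIndep {V : Type*} (H : SimpleGraph V) (r : ℕ) (B : Set V) : Prop :=
  ∀ u ∈ B, ∀ v ∈ B, u ≠ v → ∀ p : H.Walk u v, r < p.length

/-- `B` is `r`-independent in `G \ S`. -/
def RIndepAvoid {V : Type*} (G : SimpleGraph V) (r : ℕ) (S B : Set V) : Prop :=
  ∀ u ∈ B, ∀ v ∈ B, u ≠ v → ∀ p : G.Walk u v,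
    (∀ w ∈ p.support, w ∉ S) → r < p.length

/-- A class of (finite) graphs `C` is uniformly almost-wide with separator-size constant
`s` and margin functions `N r`: for every radius `r`, size `m`, graph `G ∈ C`, and
`A ⊆ V(G)` with `|A| ≥ N r m`, there are `S` with `|S| ≤ s` and `B ⊆ A` with `|B| ≥ m`
such that `B` is `r`-independent in `G \ S`. -/
def UAW (C : ∀ n : ℕ, SimpleGraph (Fin n) → Prop) (s : ℕ) (N : ℕ → ℕ → ℕ) : Prop :=
  ∀ (r m n : ℕ) (G : SimpleGraph (Fin n)), C n G →
    ∀ A : Finset (Fin n), N r m ≤ A.card →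
      ∃ S : Finset (Fin n), S.card ≤ s ∧
        ∃ B ⊆ A, m ≤ B.card ∧ Disjoint B S ∧ RIndepAvoid G r ↑S ↑B

/-- A class of (finite) graphs `C` is strongly flip-flat with flip-number `s` and margin
functions `N r`: for every radius `r`, size `m`, graph `G ∈ C`, and `A ⊆ V(G)` with
`|A| ≥ N r m`, there are a set of at most `s` flips `ℱ` and `B ⊆ A` with `|B| ≥ m`
such that `B` is `r`-independent in `G ⊕ ℱ`. -/
def SFF (C : ∀ n : ℕ, SimpleGraph (Fin n) → Prop) (s : ℕ) (N : ℕ → ℕ → ℕ) : Prop :=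
  ∀ (r m n : ℕ) (G : SimpleGraph (Fin n)), C n G →
    ∀ A : Finset (Fin n), N r m ≤ A.card →
      ∃ L : List (Set (Fin n) × Set (Fin n)), L.length ≤ s ∧
        ∃ B ⊆ A, m ≤ B.card ∧ RIndep (gflipAll G L) r ↑B

/-- `C` is weakly sparse: some biclique `K_{t,t}` is excluded as a subgraph by all
members of `C`. -/
def WeaklySparse (C : ∀ n : ℕ, SimpleGraph (Fin n) → Prop) : Prop :=
  ∃ t : ℕ, ∀ (n : ℕ) (G : SimpleGraph (Fin n)), C n G → ¬ HasBiclique G t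

/-- `C` is strongly flip-flat: for some `s` and margin functions `N`. -/
def StronglyFlipFlat (C : ∀ n : ℕ, SimpleGraph (Fin n) → Prop) : Prop :=
  ∃ (s : ℕ) (N : ℕ → ℕ → ℕ), SFF C s N

/-- `C` is uniformly almost-wide: for some `s` and margin functions `N`. -/
def UniformlyAlmostWide (C : ∀ n : ℕ, SimpleGraph (Fin n) → Prop) : Prop :=
  ∃ (s : ℕ) (N : ℕ → ℕ → ℕ), UAW C s N

open Classical in
/-- whether a single flip toggles the pair `(u,v)`. -/
def flipTog {V : Type*} (F : Set V × Set V) (u v : V) : Prop :=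
  (u ∈ F.1 ∧ v ∈ F.2) ∨ (u ∈ F.2 ∧ v ∈ F.1)

open Classical in
/-- number of flips in `L` toggling the pair `(u,v)`. -/
noncomputable def fcnt {V : Type*} (L : List (Set V × Set V)) (u v : V) : ℕ :=
  L.countP (fun F => decide (flipTog F u v))

open Classical in
lemma fcnt_cons {V : Type*} (F : Set V × Set V) (L : List (Set V × Set V)) (u v : V) :
    fcnt (F :: L) u v = fcnt L u v + if flipTog F u v then 1 else 0 := by
  unfold fcnt
  rw [List.countP_cons]
  congr 1
  by_cases h : flipTog F u v <;> simp [h]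

lemma fcnt_symm {V : Type*} (L : List (Set V × Set V)) (u v : V) :
    fcnt L u v = fcnt L v u := by
  induction L with
  | nil => rfl
  | cons F L ih =>
    rw [fcnt_cons, fcnt_cons, ih]
    congr 1
    classical
    have h : flipTog F u v ↔ flipTog F v u := by unfold flipTog; tauto
    exact if_congr h rfl rfl

lemma gflipAll_adj {V : Type*} (G : SimpleGraph V) (L : List (Set V × Set V)) (u v : V) :
    (gflipAll G L).Adj u v ↔ u ≠ v ∧ Xor' (G.Adj u v) (Odd (fcnt L u v)) := by
  induction L generalizing G with
  | nil =>
    have : fcnt ([] : List (Set V × Set V)) u v = 0 := rfl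
    rw [this]
    simp only [gflipAll, List.foldl_nil, Nat.odd_iff, Nat.zero_mod]
    unfold Xor'
    constructor
    · intro h; exact ⟨h.ne, Or.inl ⟨h, by simp⟩⟩
    · rintro ⟨hne, h | h⟩
      · exact h.1
      · simp at h
  | cons F L ih =>
    rw [show gflipAll G (F :: L) = gflipAll (gflip G F.1 F.2) L from rfl, ih, fcnt_cons]
    have hflip : (gflip G F.1 F.2).Adj u v ↔ u ≠ v ∧ Xor' (G.Adj u v) (flipTog F u v) :=
      Iff.rfl
    rw [hflip]
    by_cases ht : flipTog F u v <;> by_cases ho : Odd (fcnt L u v) <;>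
      by_cases ha : G.Adj u v <;>
      simp [ht, ho, ha, Xor', Nat.odd_add_one]

open Classical in
/-- the flip-profile of a vertex. -/
noncomputable def profL {V : Type*} (L : List (Set V × Set V)) (u : V) : List (Bool × Bool) :=
  L.map (fun F => (decide (u ∈ F.1), decide (u ∈ F.2)))

open Classical in
lemma fcnt_congr {V : Type*} (L : List (Set V × Set V)) {u u' v v' : V}
    (hu : profL L u = profL L u') (hv : profL L v = profL L v') :
    fcnt L u v = fcnt L u' v' := by
  classical
  induction L with
  | nil => rfl
  | cons F L ih =>
    simp only [profL, List.map_cons, List.cons.injEq, Prod.mk.injEq] at hu hv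
    rw [fcnt_cons, fcnt_cons, ih hu.2 hv.2]
    congr 1
    refine if_congr ?_ rfl rfl
    have h1 : u ∈ F.1 ↔ u' ∈ F.1 := by rw [← decide_eq_decide]; exact hu.1.1
    have h2 : u ∈ F.2 ↔ u' ∈ F.2 := by rw [← decide_eq_decide]; exact hu.1.2
    have h3 : v ∈ F.1 ↔ v' ∈ F.1 := by rw [← decide_eq_decide]; exact hv.1.1
    have h4 : v ∈ F.2 ↔ v' ∈ F.2 := by rw [← decide_eq_decide]; exact hv.1.2
    unfold flipTog
    tauto

lemma length_profL {V : Type*} (L : List (Set V × Set V)) (u : V) :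
    (profL L u).length = L.length := by
  simp [profL]

lemma card_image_profL {n : ℕ} (L : List (Set (Fin n) × Set (Fin n))) :
    ((Finset.univ.image (profL L)).card) ≤ 4 ^ L.length := by
  classical
  have hlen : ∀ l ∈ Finset.univ.image (profL L), l.length = L.length := by
    intro l hl
    obtain ⟨x, _, rfl⟩ := Finset.mem_image.mp hl
    exact length_profL L x
  have hinj : Set.InjOn (fun (l : List (Bool × Bool)) (i : Fin L.length) => l.getD i (false, false))
      (Finset.univ.image (profL L)) := by
    intro l1 h1 l2 h2 heq
    apply List.ext_getElem (by rw [hlen l1 h1, hlen l2 h2])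
    intro i hi1 hi2
    have hi : i < L.length := by rw [← hlen l1 h1]; exact hi1
    have := congrFun heq ⟨i, hi⟩
    rw [← List.getD_eq_getElem l1 (false, false) hi1,
      ← List.getD_eq_getElem l2 (false, false) hi2]
    exact this
  calc (Finset.univ.image (profL L)).card
      ≤ (Finset.univ : Finset (Fin L.length → Bool × Bool)).card :=
        Finset.card_le_card_of_injOn _ (fun _ _ => Finset.mem_univ _) hinj
    _ = 4 ^ L.length := by
        rw [Finset.card_univ, Fintype.card_fun]
        simp

open Classical in
lemma hasBiclique_of_deg {n : ℕ} {G : SimpleGraph (Fin n)} {t k : ℕ} {W Z : Finset (Fin n)}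
    (hW : t ≤ W.card) (hZ : t * k + t ≤ Z.card) (hdisj : Disjoint W Z)
    (hdeg : ∀ w ∈ W, (Z.filter (fun x => ¬ G.Adj w x)).card ≤ k) : HasBiclique G t := by
  classical
  obtain ⟨W', hW'sub, hW'card⟩ := Finset.exists_subset_card_eq hW
  set Bad := W'.biUnion (fun w => Z.filter (fun x => ¬ G.Adj w x)) with hBadDef
  have hBad : Bad.card ≤ t * k := by
    refine Finset.card_biUnion_le.trans ?_
    have := Finset.sum_le_card_nsmul W' (fun w => (Z.filter (fun x => ¬ G.Adj w x)).card) k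
      (fun w hw => hdeg w (hW'sub hw))
    simpa [hW'card, mul_comm] using this
  have hYcard : t ≤ (Z \ Bad).card := by
    have h1 := Finset.card_le_card_sdiff_add_card (s := Z) (t := Bad)
    omega
  obtain ⟨Y', hY'sub, hY'card⟩ := Finset.exists_subset_card_eq hYcard
  refine ⟨W', Y', ?_, hW'card, hY'card, ?_⟩
  · exact Finset.disjoint_of_subset_left hW'sub
      (Finset.disjoint_of_subset_right (hY'sub.trans Finset.sdiff_subset) hdisj)
  · intro x hx y hy
    have hyZ : y ∈ Z \ Bad := hY'sub hy
    have hynot : y ∉ Bad := (Finset.mem_sdiff.mp hyZ).2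
    by_contra hnadj
    exact hynot (Finset.mem_biUnion.mpr ⟨x, hx,
      Finset.mem_filter.mpr ⟨(Finset.mem_sdiff.mp hyZ).1, hnadj⟩⟩)

/-- Flips that isolate the vertices in a list. -/
def isoFlips {V : Type*} (G : SimpleGraph V) : List V → List (Set V × Set V)
  | [] => []
  | w :: rest => ({w}, {x | G.Adj w x ∧ x ∉ rest}) :: isoFlips G rest

lemma length_isoFlips {V : Type*} (G : SimpleGraph V) (l : List V) :
    (isoFlips G l).length = l.length := by
  induction l with
  | nil => rfl
  | cons w rest ih => simp [isoFlips, ih]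

lemma fcnt_isoFlips_zero {V : Type*} (G : SimpleGraph V) {l : List V} {u v : V}
    (hu : u ∉ l) (hv : v ∉ l) : fcnt (isoFlips G l) u v = 0 := by
  induction l with
  | nil => rfl
  | cons w rest ih =>
    rw [show isoFlips G (w :: rest) = ({w}, {x | G.Adj w x ∧ x ∉ rest}) :: isoFlips G rest from rfl,
      fcnt_cons]
    have hu' : u ∉ rest := fun h => hu (List.mem_cons_of_mem _ h)
    have hv' : v ∉ rest := fun h => hv (List.mem_cons_of_mem _ h)
    have huw : u ≠ w := fun h => hu (h ▸ List.mem_cons_self)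
    have hvw : v ≠ w := fun h => hv (h ▸ List.mem_cons_self)
    rw [ih hu' hv', if_neg]
    rintro (⟨h1, _⟩ | ⟨_, h2⟩)
    · exact huw h1
    · exact hvw h2

lemma odd_fcnt_isoFlips {V : Type*} (G : SimpleGraph V) {l : List V} {u v : V}
    (hl : l.Nodup) (hne : u ≠ v) (h : u ∈ l ∨ v ∈ l) :
    (Odd (fcnt (isoFlips G l) u v) ↔ G.Adj u v) := by
  induction l with
  | nil => simp at h
  | cons w rest ih =>
    have hwrest : w ∉ rest := (List.nodup_cons.mp hl).1
    have hrest : rest.Nodup := (List.nodup_cons.mp hl).2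
    rw [show isoFlips G (w :: rest) = ({w}, {x | G.Adj w x ∧ x ∉ rest}) :: isoFlips G rest from rfl,
      fcnt_cons]
    have hmem : ∀ a b : V, flipTog (({w}, {x | G.Adj w x ∧ x ∉ rest}) : Set V × Set V) a b ↔
        ((a = w ∧ (G.Adj w b ∧ b ∉ rest)) ∨ ((G.Adj w a ∧ a ∉ rest) ∧ b = w)) := by
      intro a b; rfl
    by_cases huw : u = w
    · subst huw
      have hvw : v ≠ u := Ne.symm hne
      by_cases hvr : v ∈ rest
      · rw [if_neg, Nat.add_zero]
        · exact ih hrest (Or.inr hvr)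
        · rw [hmem]
          rintro (⟨_, _, hc⟩ | ⟨⟨_, hc⟩, hvw'⟩)
          · exact hc hvr
          · exact hvw hvw'
      · rw [fcnt_isoFlips_zero G hwrest hvr, Nat.zero_add]
        by_cases hadj : G.Adj u v
        · rw [if_pos]
          · simpa using hadj
          · rw [hmem]; exact Or.inl ⟨rfl, hadj, hvr⟩
        · rw [if_neg]
          · simpa using hadj
          · rw [hmem]
            rintro (⟨_, ha, _⟩ | ⟨_, hvw'⟩)
            · exact hadj ha
            · exact hvw hvw'
    · by_cases hvw : v = w
      · subst hvw
        by_cases hur : u ∈ rest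
        · rw [if_neg, Nat.add_zero]
          · exact ih hrest (Or.inl hur)
          · rw [hmem]
            rintro (⟨huw', _⟩ | ⟨⟨_, hc⟩, _⟩)
            · exact huw huw'
            · exact hc hur
        · rw [fcnt_isoFlips_zero G hur hwrest, Nat.zero_add]
          by_cases hadj : G.Adj u v
          · rw [if_pos]
            · simpa using hadj
            · rw [hmem]; exact Or.inr ⟨⟨hadj.symm, hur⟩, rfl⟩
          · rw [if_neg]
            · simpa using hadj
            · rw [hmem]
              rintro (⟨huw', _⟩ | ⟨⟨ha, _⟩, _⟩)
              · exact huw huw'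
              · exact hadj ha.symm
      · have h' : u ∈ rest ∨ v ∈ rest := by
          rcases h with h | h
          · exact Or.inl ((List.mem_cons.mp h).resolve_left huw)
          · exact Or.inr ((List.mem_cons.mp h).resolve_left hvw)
        rw [if_neg, Nat.add_zero]
        · exact ih hrest h'
        · rw [hmem]
          rintro (⟨huw', _⟩ | ⟨_, hvw'⟩)
          · exact huw huw'
          · exact hvw hvw'

lemma isoFlips_adj {V : Type*} (G : SimpleGraph V) {l : List V} (hl : l.Nodup) (u v : V) :
    (gflipAll G (isoFlips G l)).Adj u v ↔ G.Adj u v ∧ u ∉ l ∧ v ∉ l := by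
  rw [gflipAll_adj]
  by_cases hne : u = v
  · subst hne
    simp [SimpleGraph.irrefl]
  · by_cases hu : u ∈ l
    · rw [Xor']
      have hodd := odd_fcnt_isoFlips G hl hne (Or.inl hu)
      constructor
      · rintro ⟨_, ⟨ha, hno⟩ | ⟨ho, hna⟩⟩
        · exact absurd (hodd.mpr ha) hno
        · exact absurd (hodd.mp ho) hna
      · rintro ⟨_, hu', _⟩; exact absurd hu hu'
    · by_cases hv : v ∈ l
      · rw [Xor']
        have hodd := odd_fcnt_isoFlips G hl hne (Or.inr hv)
        constructor
        · rintro ⟨_, ⟨ha, hno⟩ | ⟨ho, hna⟩⟩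
          · exact absurd (hodd.mpr ha) hno
          · exact absurd (hodd.mp ho) hna
        · rintro ⟨_, _, hv'⟩; exact absurd hv hv'
      · rw [fcnt_isoFlips_zero G hu hv]
        rw [Xor']
        simp only [Nat.odd_iff, Nat.zero_mod]
        constructor
        · rintro ⟨_, ⟨ha, _⟩ | ⟨h0, _⟩⟩
          · exact ⟨ha, hu, hv⟩
          · simp at h0
        · rintro ⟨ha, _, _⟩
          exact ⟨hne, Or.inl ⟨ha, by simp⟩⟩





lemma sff_of_uaw {C : ∀ n : ℕ, SimpleGraph (Fin n) → Prop} {s : ℕ} {N : ℕ → ℕ → ℕ}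
    (h : UAW C s N) : SFF C s N := by
  intro r m n G hG A hA
  obtain ⟨S, hS, B, hBA, hBm, hdisj, hind⟩ := h r m n G hG A hA
  refine ⟨isoFlips G S.toList, by rw [length_isoFlips, Finset.length_toList]; exact hS,
    B, hBA, hBm, ?_⟩
  have hnd := S.nodup_toList
  have hchar : ∀ a b : Fin n, (gflipAll G (isoFlips G S.toList)).Adj a b ↔
      G.Adj a b ∧ a ∉ S ∧ b ∉ S := by
    intro a b
    rw [isoFlips_adj G hnd a b]
    simp [Finset.mem_toList]
  intro u hu v hv hne p
  have hle : gflipAll G (isoFlips G S.toList) ≤ G := by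
    intro a b hab
    exact ((hchar a b).mp hab).1
  have hsup : ∀ {a b : Fin n} (q : (gflipAll G (isoFlips G S.toList)).Walk a b),
      a ∉ S → ∀ x ∈ q.support, x ∉ S := by
    intro a b q
    induction q with
    | nil =>
      intro ha x hx
      rw [SimpleGraph.Walk.support_nil, List.mem_singleton] at hx
      exact hx ▸ ha
    | cons hadj q ih =>
      intro ha x hx
      rw [SimpleGraph.Walk.support_cons] at hx
      rcases List.mem_cons.mp hx with rfl | hx
      · exact ha
      · exact ih ((hchar _ _).mp hadj).2.2 x hx
  have hu' : u ∉ S := Finset.disjoint_left.mp hdisj (Finset.mem_coe.mp hu)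
  have hsup' := hsup p hu'
  set p' := p.mapLe hle with hp'
  have hsupp : p'.support = p.support := by
    rw [hp', SimpleGraph.Walk.mapLe, SimpleGraph.Walk.support_map]
    exact List.map_id _
  have hlen : p'.length = p.length := by
    rw [hp', SimpleGraph.Walk.mapLe, SimpleGraph.Walk.length_map]
  have := hind u hu v hv hne p' (by
    rw [hsupp]
    intro w hw
    exact fun hwS => hsup' w hw (Finset.mem_coe.mp hwS))
  omega


lemma ws_of_uaw {C : ∀ n : ℕ, SimpleGraph (Fin n) → Prop} {s : ℕ} {N : ℕ → ℕ → ℕ}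
    (h : UAW C s N) : WeaklySparse C := by
  classical
  refine ⟨max (N 2 2) s + 1, ?_⟩
  intro n G hG ⟨X, Y, hdisj, hX, hY, hadj⟩
  set t := max (N 2 2) s + 1 with ht
  have hcard : (X ∪ Y).card = 2 * t := by
    rw [Finset.card_union_of_disjoint hdisj, hX, hY]; ring
  have hNle : N 2 2 ≤ (X ∪ Y).card := by
    rw [hcard]; omega
  obtain ⟨S, hS, B, hBA, hB2, hdisjBS, hind⟩ := h 2 2 n G hG (X ∪ Y) hNle
  obtain ⟨u, hu, v, hv, hne⟩ := Finset.one_lt_card.mp (by omega : 1 < B.card)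
  have huS : u ∉ S := Finset.disjoint_left.mp hdisjBS hu
  have hvS : v ∉ S := Finset.disjoint_left.mp hdisjBS hv
  have hcross : ∀ a b : Fin n, a ∈ B → b ∈ B → a ≠ b → G.Adj a b → False := by
    intro a b ha hb hab hadj'
    have := hind a (Finset.mem_coe.mpr ha) b (Finset.mem_coe.mpr hb) hab
      (SimpleGraph.Walk.cons hadj' SimpleGraph.Walk.nil) (by
        intro w hw
        simp only [SimpleGraph.Walk.support_cons, SimpleGraph.Walk.support_nil] at hw
        rcases List.mem_cons.mp hw with rfl | hw
        · exact fun hws => (Finset.disjoint_left.mp hdisjBS ha) (Finset.mem_coe.mp hws)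
        · rw [List.mem_singleton] at hw
          subst hw
          exact fun hws => (Finset.disjoint_left.mp hdisjBS hb) (Finset.mem_coe.mp hws))
    simp at this
  have hmid : ∀ (a b : Fin n) (y : Fin n), a ∈ B → b ∈ B → a ≠ b → y ∉ S →
      G.Adj a y → G.Adj y b → False := by
    intro a b y ha hb hab hyS h1 h2
    have := hind a (Finset.mem_coe.mpr ha) b (Finset.mem_coe.mpr hb) hab
      (SimpleGraph.Walk.cons h1 (SimpleGraph.Walk.cons h2 SimpleGraph.Walk.nil)) (by
        intro w hw
        simp only [SimpleGraph.Walk.support_cons, SimpleGraph.Walk.support_nil] at hw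
        rcases List.mem_cons.mp hw with rfl | hw
        · exact fun hws => (Finset.disjoint_left.mp hdisjBS ha) (Finset.mem_coe.mp hws)
        · rcases List.mem_cons.mp hw with rfl | hw
          · exact fun hws => hyS (Finset.mem_coe.mp hws)
          · rw [List.mem_singleton] at hw
            subst hw
            exact fun hws => (Finset.disjoint_left.mp hdisjBS hb) (Finset.mem_coe.mp hws))
    simp at this
  -- find an element of Y (resp. X) outside S
  have hYS : ∃ y ∈ Y, y ∉ S := by
    have h1 := Finset.card_le_card_sdiff_add_card (s := Y) (t := S)
    have h2 : 0 < (Y \ S).card := by omega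
    obtain ⟨y, hy⟩ := Finset.card_pos.mp h2
    exact ⟨y, (Finset.mem_sdiff.mp hy).1, (Finset.mem_sdiff.mp hy).2⟩
  have hXS : ∃ x ∈ X, x ∉ S := by
    have h1 := Finset.card_le_card_sdiff_add_card (s := X) (t := S)
    have h2 : 0 < (X \ S).card := by omega
    obtain ⟨x, hx⟩ := Finset.card_pos.mp h2
    exact ⟨x, (Finset.mem_sdiff.mp hx).1, (Finset.mem_sdiff.mp hx).2⟩
  rcases Finset.mem_union.mp (hBA hu) with huX | huY <;>
    rcases Finset.mem_union.mp (hBA hv) with hvX | hvY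
  · obtain ⟨y, hyY, hyS⟩ := hYS
    exact hmid u v y hu hv hne hyS (hadj u huX y hyY) (hadj v hvX y hyY).symm
  · exact hcross u v hu hv hne (hadj u huX v hvY)
  · exact hcross u v hu hv hne (hadj v hvX u huY).symm
  · obtain ⟨x, hxX, hxS⟩ := hXS
    exact hmid u v x hu hv hne hxS (hadj x hxX u huY).symm (hadj x hxX v hvY)

open Classical in
lemma uaw_of_ws_sff {C : ∀ n : ℕ, SimpleGraph (Fin n) → Prop} {t s : ℕ} (ht : 1 ≤ t)
    (hws : ∀ (n : ℕ) (G : SimpleGraph (Fin n)), C n G → ¬ HasBiclique G t)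
    {N : ℕ → ℕ → ℕ} (hsff : SFF C s N) :
    UAW C (4 ^ s * (t * t + 2 * t) + 4 ^ s * (4 ^ s * t))
      (fun r m => max m
        (N (3 * r) (4 ^ s * (m + (4 ^ s * (t * t + 2 * t) + 4 ^ s * (4 ^ s * t)))))) := by
  classical
  set T := t * t + 2 * t with hT
  set sOut := 4 ^ s * T + 4 ^ s * (4 ^ s * t) with hsOut
  intro r m n G hG A hA
  rcases Nat.eq_zero_or_pos r with rfl | hr
  · refine ⟨∅, by simp, A, subset_rfl, le_trans (le_max_left _ _) hA,
      Finset.disjoint_empty_right _, ?_⟩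
    intro u hu v hv hne p hp
    exact Nat.pos_of_ne_zero fun h0 => hne (SimpleGraph.Walk.eq_of_length_eq_zero h0)
  obtain ⟨L, hL, B, hBA, hBcard, hBind⟩ :=
    hsff (3 * r) (4 ^ s * (m + sOut)) n G hG A (le_trans (le_max_right _ _) hA)
  set H := gflipAll G L with hH
  set fib : List (Bool × Bool) → Finset (Fin n) :=
    fun q => Finset.univ.filter (fun x => profL L x = q) with hfib
  set img := Finset.univ.image (profL L) with himg
  have himgcard : img.card ≤ 4 ^ s :=
    (card_image_profL L).trans (Nat.pow_le_pow_right (by norm_num) hL)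
  have h4 : 1 ≤ 4 ^ s := Nat.one_le_pow _ _ (by norm_num)
  have hsOut1 : 1 ≤ sOut := by
    have hT1 : 1 ≤ T := by rw [hT]; nlinarith
    have : 1 ≤ 4 ^ s * T := by nlinarith
    omega
  have hBpos : 0 < B.card := by
    have : 1 ≤ 4 ^ s * (m + sOut) := by nlinarith
    omega
  obtain ⟨b0, hb0⟩ := Finset.card_pos.mp hBpos
  have himgne : img.Nonempty :=
    ⟨profL L b0, Finset.mem_image_of_mem _ (Finset.mem_univ _)⟩
  obtain ⟨p, hpimg, hBp⟩ := Finset.exists_le_card_fiber_of_mul_le_card_of_maps_to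
    (f := profL L) (fun a _ => Finset.mem_image_of_mem _ (Finset.mem_univ a)) himgne
    (le_trans (Nat.mul_le_mul_right _ himgcard) hBcard)
  set B' := B.filter (fun x => profL L x = p) with hB'
  have hB'card : m + sOut ≤ B'.card := hBp
  set Ssm := img.biUnion (fun q => if (fib q).card < T then fib q else ∅) with hSsm
  set Flip : List (Bool × Bool) → List (Bool × Bool) → Prop :=
    fun p1 q => ∃ a b : Fin n, profL L a = p1 ∧ profL L b = q ∧ Odd (fcnt L a b) with hFlip
  set ExcS : List (Bool × Bool) → List (Bool × Bool) → Finset (Fin n) :=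
    fun p1 q => if Flip p1 q ∧ T ≤ (fib q).card then
      (fib p1).filter (fun a => ((fib q).filter (fun x => x ≠ a ∧ ¬ G.Adj a x)).card < t)
      else ∅ with hExcS
  set Exc := img.biUnion (fun p1 => img.biUnion (fun q => ExcS p1 q)) with hExc
  set S := Ssm ∪ Exc with hS
  have hSsmcard : Ssm.card ≤ 4 ^ s * T := by
    refine Finset.card_biUnion_le.trans ?_
    have hb : ∀ q ∈ img, (if (fib q).card < T then fib q else ∅).card ≤ T := by
      intro q _
      split
      · omega
      · simp
    calc ∑ q ∈ img, (if (fib q).card < T then fib q else ∅).card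
        ≤ img.card • T := Finset.sum_le_card_nsmul _ _ _ hb
      _ ≤ 4 ^ s * T := by rw [smul_eq_mul]; exact Nat.mul_le_mul_right _ himgcard
  have hExcScard : ∀ p1 q, (ExcS p1 q).card ≤ t := by
    intro p1 q
    simp only [hExcS]
    split_ifs with hcond
    · by_contra hgt
      push_neg at hgt
      obtain ⟨W, hWsub, hWcard⟩ := Finset.exists_subset_card_eq hgt.le
      apply hws n G hG
      refine hasBiclique_of_deg (G := G) (k := t) (W := W) (Z := fib q \ W)
        hWcard.ge ?_ Finset.disjoint_sdiff ?_
      · have h1 : (fib q).card ≤ (fib q \ W).card + W.card :=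
          Finset.card_le_card_sdiff_add_card
        have h3 := hcond.2
        rw [hT] at h3
        rw [hWcard] at h1
        linarith
      · intro w hw
        have hwE := hWsub hw
        rw [Finset.mem_filter] at hwE
        have hlt := hwE.2
        have hsubf : (fib q \ W).filter (fun x => ¬ G.Adj w x) ⊆
            (fib q).filter (fun x => x ≠ w ∧ ¬ G.Adj w x) := by
          intro x hx
          rw [Finset.mem_filter] at hx ⊢
          refine ⟨(Finset.mem_sdiff.mp hx.1).1, ?_, hx.2⟩
          intro hxw
          exact (Finset.mem_sdiff.mp hx.1).2 (hxw ▸ hw)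
        exact (Finset.card_le_card hsubf).trans hlt.le
    · simp
  have hExccard : Exc.card ≤ 4 ^ s * (4 ^ s * t) := by
    refine Finset.card_biUnion_le.trans ?_
    have hinner : ∀ p1 ∈ img, (img.biUnion (fun q => ExcS p1 q)).card ≤ 4 ^ s * t := by
      intro p1 _
      refine Finset.card_biUnion_le.trans ?_
      calc ∑ q ∈ img, (ExcS p1 q).card ≤ img.card • t :=
            Finset.sum_le_card_nsmul _ _ _ (fun q _ => hExcScard p1 q)
        _ ≤ 4 ^ s * t := by rw [smul_eq_mul]; exact Nat.mul_le_mul_right _ himgcard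
    calc ∑ p1 ∈ img, (img.biUnion (fun q => ExcS p1 q)).card
        ≤ img.card • (4 ^ s * t) := Finset.sum_le_card_nsmul _ _ _ hinner
      _ ≤ 4 ^ s * (4 ^ s * t) := by
          rw [smul_eq_mul]; exact Nat.mul_le_mul_right _ himgcard
  have hScard : S.card ≤ sOut := by
    rw [hS]
    have := Finset.card_union_le Ssm Exc
    omega
  set B2 := B' \ S with hB2
  have hB2card : m ≤ B2.card := by
    rw [hB2]
    have := Finset.card_le_card_sdiff_add_card (s := B') (t := S)
    omega
  have hB2A : B2 ⊆ A := by
    intro x hx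
    exact hBA (Finset.filter_subset _ _ (Finset.sdiff_subset hx))
  have hB2B : B2 ⊆ B := fun x hx => Finset.filter_subset _ _ (Finset.sdiff_subset hx)
  have hfibT : ∀ x : Fin n, x ∉ S → T ≤ (fib (profL L x)).card := by
    intro x hx
    by_contra hsmall
    push_neg at hsmall
    apply hx
    refine Finset.mem_union_left _ (Finset.mem_biUnion.mpr
      ⟨profL L x, Finset.mem_image_of_mem _ (Finset.mem_univ x), ?_⟩)
    rw [if_pos hsmall]
    simp only [hfib]
    exact Finset.mem_filter.mpr ⟨Finset.mem_univ x, rfl⟩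
  have hnexc : ∀ a b : Fin n, a ∉ S → b ∉ S → Odd (fcnt L a b) →
      t ≤ ((fib (profL L b)).filter (fun x => x ≠ a ∧ ¬ G.Adj a x)).card := by
    intro a b ha hb hodd
    by_contra hlt
    push_neg at hlt
    apply ha
    refine Finset.mem_union_right _ (Finset.mem_biUnion.mpr
      ⟨profL L a, Finset.mem_image_of_mem _ (Finset.mem_univ a), Finset.mem_biUnion.mpr
        ⟨profL L b, Finset.mem_image_of_mem _ (Finset.mem_univ b), ?_⟩⟩)
    simp only [hExcS, hFlip]
    rw [if_pos ⟨⟨a, b, rfl, rfl, hodd⟩, hfibT b hb⟩]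
    refine Finset.mem_filter.mpr ⟨?_, hlt⟩
    simp only [hfib]
    exact Finset.mem_filter.mpr ⟨Finset.mem_univ a, rfl⟩
  have hHadj : ∀ a b : Fin n, H.Adj a b ↔ a ≠ b ∧ Xor' (G.Adj a b) (Odd (fcnt L a b)) :=
    fun a b => gflipAll_adj G L a b
  have hedge : ∀ a b : Fin n, a ∉ S → b ∉ S → G.Adj a b →
      ∃ w : H.Walk a b, w.length ≤ 3 := by
    intro a b ha hb hadj
    by_cases hodd : Odd (fcnt L a b)
    · set X := (fib (profL L b)).filter (fun x => x ≠ a ∧ ¬ G.Adj a x) with hXd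
      set Y := (fib (profL L a)).filter (fun y => y ≠ b ∧ ¬ G.Adj b y) with hYd
      have hXc : t ≤ X.card := hnexc a b ha hb hodd
      have hoddba : Odd (fcnt L b a) := by rwa [fcnt_symm]
      have hYc : t ≤ Y.card := hnexc b a hb ha hoddba
      have hprofX : ∀ x ∈ X, profL L x = profL L b := by
        intro x hx
        have h1 := (Finset.mem_filter.mp hx).1
        simp only [hfib] at h1
        exact (Finset.mem_filter.mp h1).2
      have hprofY : ∀ y ∈ Y, profL L y = profL L a := by
        intro y hy
        have h1 := (Finset.mem_filter.mp hy).1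
        simp only [hfib] at h1
        exact (Finset.mem_filter.mp h1).2
      have hadjX : ∀ x ∈ X, H.Adj a x := by
        intro x hx
        have h2 := (Finset.mem_filter.mp hx).2
        rw [hHadj]
        refine ⟨Ne.symm h2.1, Or.inr ⟨?_, h2.2⟩⟩
        rw [fcnt_congr L rfl (hprofX x hx)]
        exact hodd
      have hadjY : ∀ y ∈ Y, H.Adj b y := by
        intro y hy
        have h2 := (Finset.mem_filter.mp hy).2
        rw [hHadj]
        refine ⟨Ne.symm h2.1, Or.inr ⟨?_, h2.2⟩⟩
        rw [fcnt_congr L rfl (hprofY y hy)]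
        exact hoddba
      by_cases hXY : (X ∩ Y).Nonempty
      · obtain ⟨x, hx⟩ := hXY
        have hx1 := Finset.mem_inter.mp hx
        exact ⟨SimpleGraph.Walk.cons (hadjX x hx1.1)
          (SimpleGraph.Walk.cons (hadjY x hx1.2).symm SimpleGraph.Walk.nil), by simp⟩
      · have hdisjXY : Disjoint X Y := by
          rw [Finset.disjoint_iff_inter_eq_empty]
          exact Finset.not_nonempty_iff_eq_empty.mp hXY
        obtain ⟨X', hX's, hX'c⟩ := Finset.exists_subset_card_eq hXc
        obtain ⟨Y', hY's, hY'c⟩ := Finset.exists_subset_card_eq hYc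
        have hnall : ¬ ∀ x ∈ X', ∀ y ∈ Y', G.Adj x y := by
          intro hall
          exact hws n G hG ⟨X', Y',
            Finset.disjoint_of_subset_left hX's (Finset.disjoint_of_subset_right hY's hdisjXY),
            hX'c, hY'c, hall⟩
        push_neg at hnall
        obtain ⟨x, hx, y, hy, hnadj⟩ := hnall
        have hfc : fcnt L x y = fcnt L b a :=
          fcnt_congr L (hprofX x (hX's hx)) (hprofY y (hY's hy))
        have hxyne : x ≠ y := fun hh =>
          Finset.disjoint_left.mp hdisjXY (hX's hx) (hh ▸ hY's hy)
        have hHxy : H.Adj x y := by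
          rw [hHadj]
          exact ⟨hxyne, Or.inr ⟨by rw [hfc]; exact hoddba, hnadj⟩⟩
        exact ⟨SimpleGraph.Walk.cons (hadjX x (hX's hx)) (SimpleGraph.Walk.cons hHxy
          (SimpleGraph.Walk.cons (hadjY y (hY's hy)).symm SimpleGraph.Walk.nil)), by simp⟩
    · exact ⟨SimpleGraph.Walk.cons
        (by rw [hHadj]; exact ⟨hadj.ne, Or.inl ⟨hadj, hodd⟩⟩) SimpleGraph.Walk.nil, by simp⟩
  have hwalk : ∀ {a b : Fin n} (q : G.Walk a b), (∀ x ∈ q.support, x ∉ S) →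
      ∃ w : H.Walk a b, w.length ≤ 3 * q.length := by
    intro a b q
    induction q with
    | nil => exact fun _ => ⟨SimpleGraph.Walk.nil, by simp⟩
    | @cons a' c' b' hadj q' ih =>
      intro hsup
      have ha : a' ∉ S := hsup a' (by
        rw [SimpleGraph.Walk.support_cons]; exact List.mem_cons_self)
      have hc : c' ∉ S := hsup c' (by
        rw [SimpleGraph.Walk.support_cons]
        exact List.mem_cons_of_mem _ q'.start_mem_support)
      obtain ⟨w1, h1⟩ := hedge a' c' ha hc hadj
      obtain ⟨w2, h2⟩ := ih (fun x hx => hsup x (by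
        rw [SimpleGraph.Walk.support_cons]; exact List.mem_cons_of_mem _ hx))
      refine ⟨w1.append w2, ?_⟩
      rw [SimpleGraph.Walk.length_append, SimpleGraph.Walk.length_cons]
      omega
  refine ⟨S, hScard, B2, hB2A, hB2card, Finset.sdiff_disjoint, ?_⟩
  intro u hu v hv hne q hq
  by_contra hlen
  push_neg at hlen
  obtain ⟨w, hw⟩ := hwalk q (fun x hx hxS => hq x hx (Finset.mem_coe.mpr hxS))
  have hfin := hBind u (Finset.mem_coe.mpr (hB2B (Finset.mem_coe.mp hu)))
    v (Finset.mem_coe.mpr (hB2B (Finset.mem_coe.mp hv))) hne w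
  omega

/-- Main theorem: a class of graphs is weakly sparse and strongly flip-flat if and only
if it is uniformly almost-wide. -/
theorem weaklySparse_and_sff_iff_uaw (C : ∀ n : ℕ, SimpleGraph (Fin n) → Prop) :
    (WeaklySparse C ∧ StronglyFlipFlat C) ↔ UniformlyAlmostWide C := by
  constructor
  · rintro ⟨⟨t, hws⟩, ⟨s, N, hsff⟩⟩
    rcases Nat.eq_zero_or_pos t with rfl | ht
    · have hempty : ∀ (n : ℕ) (G : SimpleGraph (Fin n)), C n G → False := by
        intro n G hG
        exact hws n G hG ⟨∅, ∅, by simp, by simp, by simp, by simp⟩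
      exact ⟨0, fun _ _ => 0, fun r m n G hG => (hempty n G hG).elim⟩
    · exact ⟨_, _, uaw_of_ws_sff ht hws hsff⟩
  · rintro ⟨s, N, h⟩
    exact ⟨ws_of_uaw h, s, N, sff_of_uaw h⟩
end
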